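/- Let N > 1, A ≥ 0, δ > 0, and let y : [t₀, T] → ℝ be differentiable with y(t) > 0 for all t, y(t₀) ≥ δ, and (d/dt)(y(t)^N) ≥ -A·y(t) for all t ∈ [t₀, T]. Then for all t ∈ [t₀, T] with δ^{N-1} - (A(N-1)/N)(t - t₀) > 0, one has y(t) ≥ (δ^{N-1} - (A(N-1)/N)(t - t₀))^{1/(N-1)}. -/

import Mathlib

open Real Set

/-- ODE comparison lower barrier: if `y > 0`, `y(t₀) ≥ δ > 0` and
`(d/dt)(y^N) ≥ -A·y` on `[t₀,T]` with `N > 1`, `A ≥ 0`, then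
`y(t) ≥ (δ^{N-1} - (A(N-1)/N)(t-t₀))^{1/(N-1)}` whenever the base is positive. -/
theorem stmt6 (N A δ t₀ T : ℝ) (hN : 1 < N) (hA : 0 ≤ A) (hδ : 0 < δ)
    (y : ℝ → ℝ)
    (hdiff : ∀ t ∈ Set.Icc t₀ T, DifferentiableAt ℝ y t)
    (hpos : ∀ t ∈ Set.Icc t₀ T, 0 < y t)
    (hinit : δ ≤ y t₀)
    (hode : ∀ t ∈ Set.Icc t₀ T, -A * y t ≤ deriv (fun s => y s ^ N) t) :
    ∀ t ∈ Set.Icc t₀ T, 0 < δ ^ (N - 1) - A * (N - 1) / N * (t - t₀) →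
      (δ ^ (N - 1) - A * (N - 1) / N * (t - t₀)) ^ (1 / (N - 1)) ≤ y t := by
  intro t ht hbase
  have hN0 : (0:ℝ) < N := by linarith
  have hN1 : (0:ℝ) < N - 1 := by linarith
  set c : ℝ := A * (N - 1) / N with hc
  set g : ℝ → ℝ := fun s => y s ^ (N - 1) + c * (s - t₀) with hg
  -- derivative of g on the interval
  have hder : ∀ s ∈ Set.Icc t₀ T, HasDerivAt g
      (deriv y s * (N - 1) * y s ^ (N - 2) + c) s := by
    intro s hs
    have h1 : HasDerivAt (fun u => y u ^ (N - 1))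
        (deriv y s * (N - 1) * y s ^ (N - 1 - 1)) s :=
      HasDerivAt.rpow_const ((hdiff s hs).hasDerivAt) (Or.inl (hpos s hs).ne')
    have h2 : HasDerivAt (fun u => c * (u - t₀)) c s := by
      simpa using ((hasDerivAt_id s).sub_const t₀).const_mul c
    have := h1.add h2
    have he : N - 1 - 1 = N - 2 := by ring
    rw [he] at this
    exact this
  -- derivative of y ^ N
  have hderN : ∀ s ∈ Set.Icc t₀ T,
      deriv (fun u => y u ^ N) s = deriv y s * N * y s ^ (N - 1) := by
    intro s hs
    exact (HasDerivAt.rpow_const ((hdiff s hs).hasDerivAt)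
      (Or.inl (hpos s hs).ne')).deriv
  -- deriv g ≥ 0 on the interval
  have hgnn : ∀ s ∈ Set.Icc t₀ T, 0 ≤ deriv y s * (N - 1) * y s ^ (N - 2) + c := by
    intro s hs
    have hys : 0 < y s := hpos s hs
    have hode' : -A * y s ≤ deriv y s * N * y s ^ (N - 1) := by
      rw [← hderN s hs]; exact hode s hs
    have hpow : 0 < y s ^ (N - 1) := Real.rpow_pos_of_pos hys _
    have hkey : deriv y s * (N - 1) * y s ^ (N - 2)
        = (deriv y s * N * y s ^ (N - 1)) * ((N - 1) / (N * y s)) := by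
      have h2 : y s ^ (N - 2) = y s ^ (N - 1) / y s := by
        rw [show N - 2 = (N - 1) - 1 by ring, Real.rpow_sub hys, Real.rpow_one]
      rw [h2]; field_simp
    rw [hkey]
    have hfrac : 0 ≤ (N - 1) / (N * y s) := by positivity
    have := mul_le_mul_of_nonneg_right hode' hfrac
    have heq : -A * y s * ((N - 1) / (N * y s)) = -c := by
      rw [hc]; field_simp
    rw [heq] at this
    linarith
  -- g is monotone on Icc
  have hcont : ContinuousOn g (Set.Icc t₀ T) := fun s hs =>
    ((hder s hs).continuousAt).continuousWithinAt
  have hmono : MonotoneOn g (Set.Icc t₀ T) := by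
    apply monotoneOn_of_deriv_nonneg (convex_Icc t₀ T) hcont
    · intro s hs
      rw [interior_Icc] at hs
      exact ((hder s (Ioo_subset_Icc_self hs)).differentiableAt).differentiableWithinAt
    · intro s hs
      rw [interior_Icc] at hs
      rw [(hder s (Ioo_subset_Icc_self hs)).deriv]
      exact hgnn s (Ioo_subset_Icc_self hs)
  have ht₀ : t₀ ∈ Set.Icc t₀ T := ⟨le_refl _, le_trans ht.1 ht.2⟩
  have hgt : g t₀ ≤ g t := hmono ht₀ ht ht.1
  have hinit' : δ ^ (N - 1) ≤ y t₀ ^ (N - 1) :=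
    Real.rpow_le_rpow hδ.le hinit hN1.le
  have hB : δ ^ (N - 1) - c * (t - t₀) ≤ y t ^ (N - 1) := by
    have : y t₀ ^ (N - 1) + c * (t₀ - t₀) ≤ y t ^ (N - 1) + c * (t - t₀) := hgt
    simp at this
    linarith
  have hyt : 0 < y t := hpos t ht
  calc (δ ^ (N - 1) - c * (t - t₀)) ^ (1 / (N - 1))
      ≤ (y t ^ (N - 1)) ^ (1 / (N - 1)) :=
        Real.rpow_le_rpow hbase.le hB (by positivity)
    _ = y t := by
        rw [← Real.rpow_mul hyt.le, mul_one_div, div_self hN1.ne', Real.rpow_one]
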